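/- Let k ≥ 4 be an integer, and set θ = 1 + 1/√2, a = 1/√2, b = k/2 − 1/√2. Let F be a T_k-free partially directed k-graph on k+1 vertices, and let (x_1,…,x_{k−1}, y, z) be a uniformly random ordering of its k+1 vertices. Let [xy] denote the event that {x_1,…,x_{k−1},y} forms an undirected edge of F, let [x̌y] denote the event that {x_1,…,x_{k−1},y} forms an edge of F directed toward y, and let [x y-none] denote the event that {x_1,…,x_{k−1},y} supports no edge of F; define [x̌z] and [x z-none] analogously with z in place of y. Then P([xy]) + kθ·P([x̌y]) + a²·P([x y-none] ∧ [x z-none]) − 2ab·P([x y-none] ∧ [x̌z]) + b²·P([x̌y] ∧ [x̌z]) ≤ 1. -/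

import Mathlib

section Defs

variable {V W : Type*}

/-- A clause is a finite set of literals; a literal is a variable paired with a polarity
(`true` = positive, `false` = negative). -/
abbrev SatClause (V : Type*) := Finset (V × Bool)

/-- A formula is a finite set of clauses. -/
abbrev SatFormula (V : Type*) := Finset (SatClause V)

/-- The set of variables used by a clause. -/
def clauseVars [DecidableEq V] (C : SatClause V) : Finset V := C.image Prod.fst

/-- A valid `k`-SAT clause: `k` literals on `k` distinct variables. -/
def IsKClause [DecidableEq V] (k : ℕ) (C : SatClause V) : Prop :=
  C.card = k ∧ (clauseVars C).card = k

/-- A valid `k`-SAT formula. -/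
def IsKFormula [DecidableEq V] (k : ℕ) (G : SatFormula V) : Prop :=
  ∀ C ∈ G, IsKClause k C

/-- An assignment satisfies a clause if it makes all of its literals true. -/
def SatisfiesClause (a : V → Bool) (C : SatClause V) : Prop := ∀ l ∈ C, a l.1 = l.2

/-- A formula is minimal if every clause has a witness assignment satisfying it and no other
clause. -/
def MinimalFormula (G : SatFormula V) : Prop :=
  ∀ C ∈ G, ∃ w : V → Bool, SatisfiesClause w C ∧ ∀ C' ∈ G, SatisfiesClause w C' → C' = C

/-- A formula is simple if no two distinct clauses use the same set of variables. -/
def SimpleFormula [DecidableEq V] (G : SatFormula V) : Prop :=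
  ∀ C ∈ G, ∀ C' ∈ G, clauseVars C = clauseVars C' → C = C'

/-- A formula is unate if every variable occurs with only one polarity. -/
def UnateFormula (G : SatFormula V) : Prop :=
  ∀ x : V, ¬ ((∃ C ∈ G, (x, true) ∈ C) ∧ (∃ C ∈ G, (x, false) ∈ C))

/-- The set of variables used by a formula. -/
def formulaVars [DecidableEq V] (G : SatFormula V) : Finset V := G.biUnion clauseVars

/-- `f` is a `k`-SAT function: it is computed by some `k`-SAT formula (value `1` iff some
clause has all its literals satisfied). -/
def IsKSatFunction (k n : ℕ) (f : (Fin n → Bool) → Bool) : Prop :=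
  ∃ G : SatFormula (Fin n), IsKFormula k G ∧
    ∀ a : Fin n → Bool, f a = true ↔ ∃ C ∈ G, SatisfiesClause a C

/-- Relabel the variables of a formula along `φ`. -/
def mapFormula [DecidableEq V] [DecidableEq W] (φ : W → V) (F : SatFormula W) : SatFormula V :=
  F.image (fun C => C.image (fun l => (φ l.1, l.2)))

/-- `G'` is a copy of `F`: it is obtained from `F` by an injective relabeling of variables. -/
def IsCopyOf [DecidableEq V] [DecidableEq W] (F : SatFormula W) (G' : SatFormula V) : Prop :=
  ∃ φ : W → V, Set.InjOn φ ↑(formulaVars F) ∧ G' = mapFormula φ F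

/-- The number of copies of `F` in `G`, i.e. of subformulae of `G` isomorphic to `F`. -/
noncomputable def copyCount [DecidableEq V] [DecidableEq W] (F : SatFormula W)
    (G : SatFormula V) : ℕ :=
  Set.ncard {G' : SatFormula V | G' ⊆ G ∧ IsCopyOf F G'}

/-- The `b`-blowup of a clause: replace each literal by the literal of the same polarity on
one of the `b` duplicates of its variable, in all possible ways. -/
def clauseBlowup [DecidableEq V] (b : ℕ) (C : SatClause V) :
    Finset (SatClause (V × Fin b)) :=
  (C.pi (fun _ => (Finset.univ : Finset (Fin b)))).image
    (fun g => C.attach.image (fun l => ((l.1.1, g l.1 l.2), l.1.2)))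

/-- The `b`-blowup of a formula. -/
def formulaBlowup [DecidableEq V] (b : ℕ) (G : SatFormula V) : SatFormula (V × Fin b) :=
  G.biUnion (clauseBlowup b)

/-- The weight of a formula on `n` variables:
`wt(G) = Σ_i log₂(i+1)·α_i(G)` where `α_i(G)·C(n,k)` counts the `k`-sets of variables
supporting exactly `i` clauses. -/
noncomputable def formulaWt (k n : ℕ) (G : SatFormula (Fin n)) : ℝ :=
  (∑ S ∈ (Finset.univ : Finset (Fin n)).powersetCard k,
    Real.logb 2 (((G.filter (fun C => clauseVars C = S)).card : ℝ) + 1)) / (n.choose k)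

/-- A partially directed graph: a set of undirected edges together with a set of directed
(pointed) edges. -/
structure PDG (V : Type*) where
  undir : Finset (Finset V)
  dir : Finset (Finset V × V)

/-- `H` is a valid `k`-PDG: all edges have `k` vertices, each directed edge is pointed at one
of its vertices, and each `k`-set carries at most one edge (undirected or directed). -/
def PDG.IsValid (k : ℕ) (H : PDG V) : Prop :=
  (∀ e ∈ H.undir, e.card = k) ∧
  (∀ p ∈ H.dir, p.1.card = k ∧ p.2 ∈ p.1) ∧
  (∀ p ∈ H.dir, p.1 ∉ H.undir) ∧
  (∀ p ∈ H.dir, ∀ q ∈ H.dir, p.1 = q.1 → p = q)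

/-- `F` is a subgraph of `H`: a copy of `F` can be obtained from `H` by deleting vertices,
deleting edges, and/or forgetting directions of edges. -/
def PDG.IsSubgraph [DecidableEq V] (F : PDG W) (H : PDG V) : Prop :=
  ∃ φ : W → V, Function.Injective φ ∧
    (∀ e ∈ F.undir, e.image φ ∈ H.undir ∨ ∃ v, (e.image φ, v) ∈ H.dir) ∧
    (∀ p ∈ F.dir, (p.1.image φ, φ p.2) ∈ H.dir)

/-- The image of a PDG under a relabeling of vertices. -/
def PDG.map [DecidableEq V] (φ : W → V) (F : PDG W) : PDG V :=
  ⟨F.undir.image (Finset.image φ), F.dir.image (fun p => (p.1.image φ, φ p.2))⟩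

/-- The PDG `T_k` on vertex set `{0, …, k}` (0-indexed): undirected edges everything-but-`k`
and everything-but-`k-2`, and the edge everything-but-`k-1` directed toward `k`. -/
def TkPDG (k : ℕ) : PDG (Fin (k + 1)) where
  undir := { Finset.univ.erase ⟨k, Nat.lt_succ_self k⟩,
             Finset.univ.erase ⟨k - 2, by omega⟩ }
  dir := { (Finset.univ.erase ⟨k - 1, by omega⟩, ⟨k, Nat.lt_succ_self k⟩) }

/-- A semisimple formula: every `k`-set of variables supports at most one clause, or exactly
two clauses whose polarities differ on exactly one variable. -/
def SemisimpleFormula [DecidableEq V] (G : SatFormula V) : Prop :=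
  ∀ C₁ ∈ G, ∀ C₂ ∈ G, C₁ ≠ C₂ → clauseVars C₁ = clauseVars C₂ →
    (((C₁ \ C₂).image Prod.fst).card = 1 ∧
      ∀ C₃ ∈ G, clauseVars C₃ = clauseVars C₁ → C₃ = C₁ ∨ C₃ = C₂)

/-- The type of a (semisimple) formula: an undirected edge on each variable set supporting
exactly one clause, and for each variable set supporting two clauses a directed edge pointed
at the variable where the two clauses differ. -/
def formulaType [DecidableEq V] (G : SatFormula V) : PDG V where
  undir := (G.filter (fun C => ∀ C' ∈ G, clauseVars C' = clauseVars C → C' = C)).image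
    clauseVars
  dir := ((G ×ˢ G).filter (fun p => p.1 ≠ p.2 ∧ clauseVars p.1 = clauseVars p.2)).biUnion
    (fun p => ((p.1 \ p.2).image Prod.fst).image (fun v => (clauseVars p.1, v)))

end Defs

/-- Probability of an event over a uniformly random ordering of the `k+1` vertices. -/
noncomputable def permProb (k : ℕ) (p : Equiv.Perm (Fin (k + 1)) → Prop) : ℝ :=
  (Set.ncard {σ : Equiv.Perm (Fin (k + 1)) | p σ} : ℝ) / (Nat.factorial (k + 1))

/-- The set `x = {x_1, …, x_{k−1}}`: images of the first `k−1` positions. -/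
def xSet (k : ℕ) (σ : Equiv.Perm (Fin (k + 1))) : Finset (Fin (k + 1)) :=
  (Finset.univ.filter (fun i : Fin (k + 1) => (i : ℕ) < k - 1)).image σ

/-- The vertex `y`: image of position `k−1`. -/
def yVtx (k : ℕ) (σ : Equiv.Perm (Fin (k + 1))) : Fin (k + 1) := σ ⟨k - 1, by omega⟩

/-- The vertex `z`: image of position `k`. -/
def zVtx (k : ℕ) (σ : Equiv.Perm (Fin (k + 1))) : Fin (k + 1) := σ ⟨k, Nat.lt_succ_self k⟩

/-- There is no edge (undirected or directed) of `F` on the vertex set `S`. -/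
def NoEdgeOn {V : Type*} (F : PDG V) (S : Finset V) : Prop :=
  S ∉ F.undir ∧ ∀ v, (S, v) ∉ F.dir


section Aux
open Finset

/-- Filter with a pinned classical decidability instance. -/
noncomputable def cFilter {α : Type*} (p : α → Prop) (s : Finset α) : Finset α :=
  @Finset.filter α p (fun a => Classical.propDecidable (p a)) s

lemma mem_cFilter {α : Type*} {p : α → Prop} {s : Finset α} {a : α} :
    a ∈ cFilter p s ↔ a ∈ s ∧ p a := by
  simp [cFilter]

lemma exists_perm_two' {α : Type*} [DecidableEq α] (y z y' z' : α) (h : y ≠ z) (h' : y' ≠ z') :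
    ∃ τ : Equiv.Perm α, τ y = y' ∧ τ z = z' := by
  refine ⟨Equiv.swap (Equiv.swap y y' z) z' * Equiv.swap y y', ?_, ?_⟩
  · simp only [Equiv.Perm.mul_apply, Equiv.swap_apply_left]
    have hw : y' ≠ Equiv.swap y y' z := by
      have := (Equiv.swap y y').injective.ne h.symm
      simpa using this.symm
    exact Equiv.swap_apply_of_ne_of_ne hw h'
  · simp only [Equiv.Perm.mul_apply, Equiv.swap_apply_left]

lemma exists_perm_three' {α : Type*} [DecidableEq α] (a b c x y z : α) (hab : a ≠ b)
    (hac : a ≠ c) (hbc : b ≠ c) (hxy : x ≠ y) (hxz : x ≠ z) (hyz : y ≠ z) :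
    ∃ φ : Equiv.Perm α, φ a = x ∧ φ b = y ∧ φ c = z := by
  obtain ⟨τ, h1, h2⟩ := exists_perm_two' a b x y hab hxy
  have hcx : x ≠ τ c := by
    have := τ.injective.ne hac; rw [h1] at this; exact this
  have hcy : y ≠ τ c := by
    have := τ.injective.ne hbc; rw [h2] at this; exact this
  refine ⟨Equiv.swap (τ c) z * τ, ?_, ?_, ?_⟩
  · simp only [Equiv.Perm.mul_apply, h1]
    exact Equiv.swap_apply_of_ne_of_ne hcx hxz
  · simp only [Equiv.Perm.mul_apply, h2]
    exact Equiv.swap_apply_of_ne_of_ne hcy hyz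
  · simp only [Equiv.Perm.mul_apply, Equiv.swap_apply_left]

lemma fiber_card_eq' {n : ℕ} (i j : Fin n) (y z y' z' : Fin n) (h : y ≠ z) (h' : y' ≠ z') :
    (cFilter (fun σ : Equiv.Perm (Fin n) => σ i = y ∧ σ j = z) univ).card =
    (cFilter (fun σ : Equiv.Perm (Fin n) => σ i = y' ∧ σ j = z') univ).card := by
  obtain ⟨τ, h1, h2⟩ := exists_perm_two' y z y' z' h h'
  apply Finset.card_bij' (fun σ _ => τ * σ) (fun σ _ => τ⁻¹ * σ)
  · intro σ hσ
    simp only [mem_cFilter, mem_univ, true_and] at hσ ⊢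
    simp [Equiv.Perm.mul_apply, hσ.1, hσ.2, h1, h2]
  · intro σ hσ
    simp only [mem_cFilter, mem_univ, true_and] at hσ ⊢
    constructor
    · have : τ⁻¹ (σ i) = τ⁻¹ y' := by rw [hσ.1]
      rwa [← h1, Equiv.Perm.inv_def, Equiv.symm_apply_apply] at this
    · have : τ⁻¹ (σ j) = τ⁻¹ z' := by rw [hσ.2]
      rwa [← h2, Equiv.Perm.inv_def, Equiv.symm_apply_apply] at this
  · intro σ _; simp [mul_assoc]
  · intro σ _; simp [mul_assoc]

lemma perm_pair_count' {n : ℕ} (i j : Fin n) (hij : i ≠ j) (q : Fin n → Fin n → Prop) :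
    (cFilter (fun σ : Equiv.Perm (Fin n) => q (σ i) (σ j)) univ).card * (n * (n-1)) =
    (cFilter (fun p : Fin n × Fin n => p.1 ≠ p.2 ∧ q p.1 p.2) univ).card *
      n.factorial := by
  set c := (cFilter (fun σ : Equiv.Perm (Fin n) => σ i = i ∧ σ j = j) univ).card with hc
  have key : ∀ q' : Fin n → Fin n → Prop,
      (cFilter (fun σ : Equiv.Perm (Fin n) => q' (σ i) (σ j)) univ).card =
      (cFilter (fun p : Fin n × Fin n => p.1 ≠ p.2 ∧ q' p.1 p.2) univ).card * c := by
    intro q'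
    rw [Finset.card_eq_sum_card_fiberwise (f := fun σ => (σ i, σ j))
      (t := cFilter (fun p : Fin n × Fin n => p.1 ≠ p.2 ∧ q' p.1 p.2) univ)]
    · rw [Finset.sum_congr rfl (fun p hp => ?_), Finset.sum_const, smul_eq_mul]
      simp only [mem_cFilter, mem_univ, true_and] at hp
      have : (cFilter (fun σ : Equiv.Perm (Fin n) => q' (σ i) (σ j)) univ).filter
          (fun σ => (σ i, σ j) = p) =
          cFilter (fun σ : Equiv.Perm (Fin n) => σ i = p.1 ∧ σ j = p.2) univ := by
        ext σ
        simp only [mem_filter, mem_cFilter, mem_univ, true_and, Prod.ext_iff]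
        constructor
        · rintro ⟨_, h⟩; exact h
        · rintro ⟨h1, h2⟩; exact ⟨by rw [h1, h2]; exact hp.2, h1, h2⟩
      rw [this]
      exact fiber_card_eq' i j p.1 p.2 i j hp.1 hij
    · intro σ hσ
      simp only [Finset.mem_coe, mem_cFilter, mem_univ, true_and] at hσ ⊢
      exact ⟨σ.injective.ne hij, hσ⟩
  have hTrue := key (fun _ _ => True)
  have hperm : cFilter (fun _ : Equiv.Perm (Fin n) => True) univ = univ := by
    ext σ; simp [mem_cFilter]
  have hpair : cFilter (fun p : Fin n × Fin n => p.1 ≠ p.2 ∧ True) univ =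
      (univ : Finset (Fin n)).offDiag := by
    ext p; simp [mem_cFilter, Finset.mem_offDiag]
  rw [hperm, hpair, Finset.card_univ, Fintype.card_perm, Fintype.card_fin] at hTrue
  have hcard : (univ : Finset (Fin n)).offDiag.card = n * (n-1) := by
    rw [Finset.offDiag_card, Finset.card_univ, Fintype.card_fin]
    cases n with
    | zero => rfl
    | succ m => rw [Nat.succ_sub_one, Nat.mul_succ]; omega
  rw [hcard] at hTrue
  rw [key q, hTrue]
  ring

lemma permProb_pair' {k : ℕ} (hk : 1 ≤ k) (q : Fin (k+1) → Fin (k+1) → Prop) :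
    permProb k (fun σ => q (σ ⟨k - 1, by omega⟩) (σ ⟨k, Nat.lt_succ_self k⟩)) =
    ((cFilter (fun p : Fin (k+1) × Fin (k+1) => p.1 ≠ p.2 ∧ q p.1 p.2) univ).card : ℝ)
      / ((k+1) * k) := by
  have hij : (⟨k - 1, by omega⟩ : Fin (k+1)) ≠ ⟨k, Nat.lt_succ_self k⟩ := by
    simp only [ne_eq, Fin.mk.injEq]; omega
  have hcount := perm_pair_count' (n := k+1) _ _ hij q
  rw [permProb]
  have hset : {σ : Equiv.Perm (Fin (k+1)) |
        q (σ ⟨k - 1, by omega⟩) (σ ⟨k, Nat.lt_succ_self k⟩)}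
      = ↑(cFilter (fun σ : Equiv.Perm (Fin (k+1)) =>
          q (σ ⟨k - 1, by omega⟩) (σ ⟨k, Nat.lt_succ_self k⟩)) univ) := by
    ext σ; simp [mem_cFilter]
  rw [hset, Set.ncard_coe_finset]
  have h1 : ((k:ℝ)+1) * k ≠ 0 := by positivity
  have h2 : ((k+1).factorial : ℝ) ≠ 0 := by positivity
  rw [div_eq_div_iff h2 h1]
  rw [Nat.add_sub_cancel] at hcount
  exact_mod_cast hcount

lemma insert_y_eq' {k : ℕ} (hk : 4 ≤ k) (σ : Equiv.Perm (Fin (k+1))) :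
    insert (yVtx k σ) (xSet k σ) = Finset.univ.erase (zVtx k σ) := by
  ext v
  simp only [mem_insert, xSet, yVtx, zVtx, mem_image, mem_filter, mem_univ, true_and,
    mem_erase, ne_eq]
  constructor
  · rintro (rfl | ⟨i, hi, rfl⟩)
    · refine ⟨fun h => ?_, trivial⟩
      have := σ.injective h
      simp only [Fin.mk.injEq] at this; omega
    · refine ⟨fun h => ?_, trivial⟩
      have := σ.injective h
      rw [Fin.ext_iff] at this; simp at this; omega
  · rintro ⟨hv, -⟩
    rcases Nat.lt_trichotomy ((σ.symm v : ℕ)) (k-1) with h | h | h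
    · right; exact ⟨σ.symm v, h, σ.apply_symm_apply v⟩
    · left
      rw [← σ.apply_symm_apply v]
      congr 1
      exact Fin.ext (by simp only [Fin.val_mk]; omega)
    · exfalso
      apply hv
      rw [← σ.apply_symm_apply v]
      congr 1
      have := (σ.symm v).isLt
      exact Fin.ext (by simp only [Fin.val_mk]; omega)

lemma insert_z_eq' {k : ℕ} (hk : 4 ≤ k) (σ : Equiv.Perm (Fin (k+1))) :
    insert (zVtx k σ) (xSet k σ) = Finset.univ.erase (yVtx k σ) := by
  ext v
  simp only [mem_insert, xSet, yVtx, zVtx, mem_image, mem_filter, mem_univ, true_and,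
    mem_erase, ne_eq]
  constructor
  · rintro (rfl | ⟨i, hi, rfl⟩)
    · refine ⟨fun h => ?_, trivial⟩
      have := σ.injective h
      simp only [Fin.mk.injEq] at this; omega
    · refine ⟨fun h => ?_, trivial⟩
      have := σ.injective h
      rw [Fin.ext_iff] at this; simp at this; omega
  · rintro ⟨hv, -⟩
    rcases Nat.lt_trichotomy ((σ.symm v : ℕ)) (k-1) with h | h | h
    · right; exact ⟨σ.symm v, h, σ.apply_symm_apply v⟩
    · exfalso
      apply hv
      rw [← σ.apply_symm_apply v]
      congr 1
      exact Fin.ext (by simp only [Fin.val_mk]; omega)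
    · left
      rw [← σ.apply_symm_apply v]
      congr 1
      have := (σ.symm v).isLt
      exact Fin.ext (by simp only [Fin.val_mk]; omega)

lemma permProb_congr' {k : ℕ} {p p' : Equiv.Perm (Fin (k+1)) → Prop}
    (h : ∀ σ, p σ ↔ p' σ) : permProb k p = permProb k p' := by
  unfold permProb
  rw [show {σ : Equiv.Perm (Fin (k+1)) | p σ} = {σ | p' σ} from Set.ext h]


variable {k : ℕ} (F : PDG (Fin (k+1)))

lemma cardC1' (hk : 1 ≤ k) :
    (cFilter (fun p : Fin (k+1) × Fin (k+1) =>
      p.1 ≠ p.2 ∧ Finset.univ.erase p.2 ∈ F.undir) univ).card =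
    (cFilter (fun v : Fin (k+1) => Finset.univ.erase v ∈ F.undir) univ).card * k := by
  rw [Finset.card_eq_sum_card_fiberwise (f := Prod.snd)
    (t := cFilter (fun v : Fin (k+1) => Finset.univ.erase v ∈ F.undir) univ)]
  · rw [Finset.sum_congr rfl (fun z hz => ?_), Finset.sum_const, smul_eq_mul]
    simp only [mem_cFilter, mem_univ, true_and] at hz
    have : ((cFilter (fun p : Fin (k+1) × Fin (k+1) =>
        p.1 ≠ p.2 ∧ Finset.univ.erase p.2 ∈ F.undir) univ).filter (fun p => p.2 = z)) =
        (univ.erase z).image (fun y => (y, z)) := by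
      ext ⟨y', z'⟩
      simp only [mem_filter, mem_cFilter, mem_univ, true_and, mem_image, mem_erase, ne_eq]
      constructor
      · rintro ⟨⟨hne, _⟩, rfl⟩
        exact ⟨y', ⟨hne, trivial⟩, rfl⟩
      · rintro ⟨y, ⟨hne, -⟩, heq⟩
        rw [Prod.ext_iff] at heq
        obtain ⟨rfl, rfl⟩ := heq
        exact ⟨⟨hne, hz⟩, rfl⟩
    rw [this, Finset.card_image_of_injective _ (fun a b h => (Prod.mk.injEq _ _ _ _ ▸ h).1),
      Finset.card_erase_of_mem (mem_univ z), card_univ, Fintype.card_fin]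
    omega
  · intro p hp
    simp only [Finset.mem_coe, mem_cFilter, mem_univ, true_and] at hp ⊢
    exact hp.2

lemma cardC2' (hval : F.IsValid k) :
    (cFilter (fun p : Fin (k+1) × Fin (k+1) =>
      p.1 ≠ p.2 ∧ (Finset.univ.erase p.2, p.1) ∈ F.dir) univ).card =
    (cFilter (fun v : Fin (k+1) => ∃ w, (Finset.univ.erase v, w) ∈ F.dir) univ).card := by
  apply Finset.card_bij (fun p _ => p.2)
  · intro p hp
    simp only [mem_cFilter, mem_univ, true_and] at hp ⊢
    exact ⟨p.1, hp.2⟩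
  · intro p hp p' hp' h
    simp only [mem_cFilter, mem_univ, true_and] at hp hp'
    have := hval.2.2.2 _ hp.2 _ hp'.2 (by rw [h])
    simp only [Prod.mk.injEq] at this
    exact Prod.ext this.2 h
  · intro z hz
    simp only [mem_cFilter, mem_univ, true_and] at hz
    obtain ⟨w, hw⟩ := hz
    have hwz : w ≠ z := by
      have := (hval.2.1 _ hw).2
      simp only [mem_erase] at this
      exact this.1
    exact ⟨(w, z), by simp only [mem_cFilter, mem_univ, true_and]; exact ⟨hwz, hw⟩, rfl⟩

lemma cardC4' (hval : F.IsValid k)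
    (hA : ∀ r w, (Finset.univ.erase r, w) ∈ F.dir → NoEdgeOn F (Finset.univ.erase w)) :
    (cFilter (fun p : Fin (k+1) × Fin (k+1) =>
      p.1 ≠ p.2 ∧ NoEdgeOn F (Finset.univ.erase p.2) ∧
        (Finset.univ.erase p.1, p.2) ∈ F.dir) univ).card =
    (cFilter (fun v : Fin (k+1) => ∃ w, (Finset.univ.erase v, w) ∈ F.dir) univ).card := by
  apply Finset.card_bij (fun p _ => p.1)
  · intro p hp
    simp only [mem_cFilter, mem_univ, true_and] at hp ⊢
    exact ⟨p.2, hp.2.2⟩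
  · intro p hp p' hp' h
    simp only [mem_cFilter, mem_univ, true_and] at hp hp'
    have := hval.2.2.2 _ hp.2.2 _ hp'.2.2 (by rw [h])
    simp only [Prod.mk.injEq] at this
    exact Prod.ext h this.2
  · intro y hy
    simp only [mem_cFilter, mem_univ, true_and] at hy
    obtain ⟨w, hw⟩ := hy
    have hwy : w ≠ y := by
      have := (hval.2.1 _ hw).2
      simp only [mem_erase] at this
      exact this.1
    exact ⟨(y, w), by
      simp only [mem_cFilter, mem_univ, true_and]
      exact ⟨hwy.symm, hA _ _ hw, hw⟩, rfl⟩

lemma cardC3' :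
    (cFilter (fun p : Fin (k+1) × Fin (k+1) =>
      p.1 ≠ p.2 ∧ NoEdgeOn F (Finset.univ.erase p.2) ∧
        NoEdgeOn F (Finset.univ.erase p.1)) univ) =
    (cFilter (fun v : Fin (k+1) => NoEdgeOn F (Finset.univ.erase v)) univ).offDiag := by
  ext ⟨y, z⟩
  simp only [mem_cFilter, mem_univ, true_and, Finset.mem_offDiag, ne_eq]
  tauto

lemma cardC5sub' :
    (cFilter (fun p : Fin (k+1) × Fin (k+1) =>
      p.1 ≠ p.2 ∧ (Finset.univ.erase p.2, p.1) ∈ F.dir ∧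
        (Finset.univ.erase p.1, p.2) ∈ F.dir) univ) ⊆
    (cFilter (fun v : Fin (k+1) => ∃ w, (Finset.univ.erase v, w) ∈ F.dir) univ).offDiag := by
  intro ⟨y, z⟩ hp
  simp only [mem_cFilter, mem_univ, true_and, Finset.mem_offDiag] at hp ⊢
  exact ⟨⟨z, hp.2.2⟩, ⟨y, hp.2.1⟩, hp.1⟩

lemma cardC5zero' (hA : ∀ r w, (Finset.univ.erase r, w) ∈ F.dir →
      NoEdgeOn F (Finset.univ.erase w)) :
    (cFilter (fun p : Fin (k+1) × Fin (k+1) =>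
      p.1 ≠ p.2 ∧ (Finset.univ.erase p.2, p.1) ∈ F.dir ∧
        (Finset.univ.erase p.1, p.2) ∈ F.dir) univ) = ∅ := by
  apply Finset.eq_empty_of_forall_notMem
  intro ⟨y, z⟩ hp
  simp only [mem_cFilter, mem_univ, true_and] at hp
  exact (hA z y hp.2.1).2 z hp.2.2

lemma partition_card' (hval : F.IsValid k) :
    (cFilter (fun v : Fin (k+1) => Finset.univ.erase v ∈ F.undir) univ).card +
    (cFilter (fun v : Fin (k+1) => ∃ w, (Finset.univ.erase v, w) ∈ F.dir) univ).card +
    (cFilter (fun v : Fin (k+1) => NoEdgeOn F (Finset.univ.erase v)) univ).card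
      = k + 1 := by
  have hdisj : Disjoint
      (cFilter (fun v : Fin (k+1) => Finset.univ.erase v ∈ F.undir) univ)
      (cFilter (fun v : Fin (k+1) => ∃ w, (Finset.univ.erase v, w) ∈ F.dir) univ) := by
    rw [Finset.disjoint_left]
    intro v hv hv'
    simp only [mem_cFilter, mem_univ, true_and] at hv hv'
    obtain ⟨w, hw⟩ := hv'
    exact hval.2.2.1 _ hw hv
  have hSN : (cFilter (fun v : Fin (k+1) => NoEdgeOn F (Finset.univ.erase v)) univ) =
      univ \ ((cFilter (fun v : Fin (k+1) => Finset.univ.erase v ∈ F.undir) univ) ∪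
        (cFilter (fun v : Fin (k+1) => ∃ w, (Finset.univ.erase v, w) ∈ F.dir) univ)) := by
    ext v
    simp only [mem_cFilter, mem_univ, true_and, mem_sdiff, mem_union, NoEdgeOn, not_or]
    push_neg
    tauto
  rw [hSN, Finset.card_sdiff_of_subset (Finset.subset_univ _), Finset.card_union_of_disjoint hdisj]
  simp only [card_univ, Fintype.card_fin]
  have := Finset.card_union_of_disjoint hdisj ▸ Finset.card_le_univ
    ((cFilter (fun v : Fin (k+1) => Finset.univ.erase v ∈ F.undir) univ) ∪
      (cFilter (fun v : Fin (k+1) => ∃ w, (Finset.univ.erase v, w) ∈ F.dir) univ))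
  rw [Fintype.card_fin] at this
  omega

lemma free_case' (hk : 4 ≤ k) (hval : F.IsValid k)
    (hfree : ¬ (TkPDG k).IsSubgraph F)
    (r w : Fin (k+1)) (hdir : (univ.erase r, w) ∈ F.dir)
    (hw : univ.erase w ∈ F.undir ∨ ∃ u, (univ.erase w, u) ∈ F.dir)
    (v : Fin (k+1)) (hv : univ.erase v ∈ F.undir ∨ ∃ u, (univ.erase v, u) ∈ F.dir)
    (hvr : v ≠ r) (hvw : v ≠ w) : False := by
  have hwr : w ≠ r := by
    have := (hval.2.1 _ hdir).2
    simp only [mem_erase] at this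
    exact this.1
  obtain ⟨φ, hφ1, hφ2, hφ3⟩ := exists_perm_three' (⟨k, Nat.lt_succ_self k⟩ : Fin (k+1))
    ⟨k - 2, by omega⟩ ⟨k - 1, by omega⟩ w v r
    (by simp only [ne_eq, Fin.mk.injEq]; omega)
    (by simp only [ne_eq, Fin.mk.injEq]; omega)
    (by simp only [ne_eq, Fin.mk.injEq]; omega)
    hvw.symm hwr hvr
  have himg : ∀ x : Fin (k+1), (univ.erase x).image φ = univ.erase (φ x) := by
    intro x
    rw [Finset.image_erase φ.injective, Finset.image_univ_equiv]
  apply hfree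
  refine ⟨φ, φ.injective, ?_, ?_⟩
  · intro e he
    simp only [TkPDG, Finset.mem_insert, Finset.mem_singleton] at he
    rcases he with rfl | rfl
    · rw [himg, hφ1]; exact hw
    · rw [himg, hφ2]; exact hv
  · intro p hp
    simp only [TkPDG, Finset.mem_singleton] at hp
    subst hp
    simp only
    rw [himg, hφ3, hφ1]
    exact hdir


end Aux

section Arith
open Finset

lemma combine_ineq (M A B C D' E c2 c3 c4 c5 : ℝ) (hM : 0 < M)
    (h : A + c2 * B + c3 * C - c4 * D' + c5 * E ≤ M) :
    A / M + c2 * (B / M) + c3 * (C / M) - c4 * (D' / M) + c5 * (E / M) ≤ 1 := by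
  have h1 : A / M + c2 * (B / M) + c3 * (C / M) - c4 * (D' / M) + c5 * (E / M)
      = (A + c2 * B + c3 * C - c4 * D' + c5 * E) / M := by ring
  rw [h1, div_le_one hM]
  exact h

lemma helpA (k u d n a : ℝ) (ha2 : a ^ 2 = 1 / 2) (hd : 0 ≤ d) (hu : 0 ≤ u) (hn0 : 0 ≤ n)
    (hsum : u + d + n = k + 1) (hk4 : 4 ≤ k) (hdn : d = 0 ∨ 1 ≤ n) :
    u * k + k * (1 + a) * d + a ^ 2 * (n * n - n) - 2 * a * (k / 2 - a) * d
      + (k / 2 - a) ^ 2 * 0 ≤ (k + 1) * k := by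
  have hkey : k * (1 + a) * d + a ^ 2 * (n * n - n) - 2 * a * (k / 2 - a) * d
      = k * d + d + (n * n - n) / 2 := by
    linear_combination (n * n - n + 2 * d) * ha2
  rcases hdn with rfl | hn1
  · nlinarith [hkey, mul_nonneg hn0 (show 0 ≤ 2 * k + 1 - n by linarith)]
  · nlinarith [hkey, mul_nonneg (show 0 ≤ n - 1 by linarith)
      (show 0 ≤ 2 * k + 2 - n by linarith)]

lemma helpB (k u d n c4 c5 a : ℝ) (ha2 : a ^ 2 = 1 / 2) (ha0 : 0 ≤ a) (ha1 : a ≤ 1)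
    (hc4 : 0 ≤ c4) (hc5 : 0 ≤ c5) (hn : n = k - 1) (hk4 : 4 ≤ k)
    (hcase : d = 1 ∧ u = 1 ∧ c5 = 0 ∨ d = 2 ∧ u = 0 ∧ c5 ≤ 2) :
    u * k + k * (1 + a) * d + a ^ 2 * (n * n - n) - 2 * a * (k / 2 - a) * c4
      + (k / 2 - a) ^ 2 * c5 ≤ (k + 1) * k := by
  subst hn
  have hb0 : 0 ≤ k / 2 - a := by linarith
  have hdrop : 0 ≤ 2 * a * (k / 2 - a) * c4 :=
    mul_nonneg (mul_nonneg (by linarith) hb0) hc4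
  have hquadk : a ^ 2 * ((k - 1) * (k - 1) - (k - 1)) = ((k - 1) * (k - 1) - (k - 1)) / 2 := by
    rw [ha2]; ring
  rcases hcase with ⟨rfl, rfl, rfl⟩ | ⟨rfl, rfl, hc52⟩
  · have hka : k * a ≤ k := by nlinarith
    nlinarith [hquadk, hka, hdrop]
  · have hb2 : (k / 2 - a) ^ 2 * 2 = k ^ 2 / 2 - 2 * k * a + 1 := by
      linear_combination 2 * ha2
    have hbC5 : (k / 2 - a) ^ 2 * c5 ≤ (k / 2 - a) ^ 2 * 2 :=
      mul_le_mul_of_nonneg_left hc52 (sq_nonneg _)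
    nlinarith [hquadk, hb2, hbC5, hdrop]

lemma main_arith (k U D N C4 C5 : ℕ) (hk : 4 ≤ k)
    (hsum : U + D + N = k + 1)
    (hcase : (C4 = D ∧ C5 = 0 ∧ (1 ≤ D → 1 ≤ N)) ∨
      (U + D = 2 ∧ 1 ≤ D ∧ D ≤ 2 ∧ C5 ≤ D * D - D ∧ N = k - 1)) :
    ((U * k : ℕ) : ℝ) + k * (1 + 1 / Real.sqrt 2) * D
      + (1 / Real.sqrt 2) ^ 2 * ((N * N - N : ℕ) : ℝ)
      - 2 * (1 / Real.sqrt 2) * ((k : ℝ) / 2 - 1 / Real.sqrt 2) * C4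
      + ((k : ℝ) / 2 - 1 / Real.sqrt 2) ^ 2 * C5 ≤ ((k : ℝ) + 1) * k := by
  have hs0 : (0:ℝ) < Real.sqrt 2 := Real.sqrt_pos.mpr (by norm_num)
  obtain ⟨a, ha⟩ : ∃ a : ℝ, a = 1 / Real.sqrt 2 := ⟨_, rfl⟩
  rw [show (1:ℝ) / Real.sqrt 2 = a from ha.symm]
  have ha2 : a ^ 2 = 1 / 2 := by
    rw [ha, div_pow, one_pow, Real.sq_sqrt (by norm_num : (0:ℝ) ≤ 2)]
  have ha0 : 0 ≤ a := by rw [ha]; positivity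
  have ha1 : a ≤ 1 := by
    rw [ha, div_le_one hs0]
    nlinarith [Real.sq_sqrt (show (0:ℝ) ≤ 2 by norm_num), Real.sqrt_nonneg 2]
  have hk4 : (4:ℝ) ≤ k := by exact_mod_cast hk
  have hNle : N ≤ N * N := by
    cases N with
    | zero => exact Nat.le_refl 0
    | succ m => exact Nat.le_mul_of_pos_left _ (Nat.succ_pos m)
  have hNN : ((N * N - N : ℕ) : ℝ) = (N:ℝ) * N - N := by
    push_cast [Nat.cast_sub hNle]; ring
  have hsumR : (U:ℝ) + D + N = (k:ℝ) + 1 := by exact_mod_cast hsum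
  rw [hNN]
  rcases hcase with ⟨hC4D, hC5z, hDN⟩ | ⟨hUD, hD1, hD2, hC5, hN⟩
  · -- Case A
    rw [hC4D, hC5z]
    push_cast
    have hdn : (D:ℝ) = 0 ∨ (1:ℝ) ≤ N := by
      rcases Nat.eq_zero_or_pos D with h | h
      · left; exact_mod_cast h
      · right; exact_mod_cast hDN h
    linarith only [helpA (k:ℝ) U D N a ha2 (Nat.cast_nonneg D) (Nat.cast_nonneg U)
      (Nat.cast_nonneg N) hsumR hk4 hdn]
  · -- Case B
    have hNR : (N:ℝ) = (k:ℝ) - 1 := by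
      rw [hN]; push_cast [Nat.cast_sub (show 1 ≤ k by omega)]; ring
    have hcaseR : (D:ℝ) = 1 ∧ (U:ℝ) = 1 ∧ (C5:ℝ) = 0 ∨
        (D:ℝ) = 2 ∧ (U:ℝ) = 0 ∧ (C5:ℝ) ≤ 2 := by
      rcases (show D = 1 ∨ D = 2 by omega) with hDv | hDv
      · left
        refine ⟨by exact_mod_cast hDv, by exact_mod_cast (show U = 1 by omega), ?_⟩
        have : C5 = 0 := by rw [hDv] at hC5; omega
        exact_mod_cast this
      · right
        refine ⟨by exact_mod_cast hDv, by exact_mod_cast (show U = 0 by omega), ?_⟩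
        have : C5 ≤ 2 := by rw [hDv] at hC5; omega
        exact_mod_cast this
    push_cast
    linarith only [helpB (k:ℝ) U D N C4 C5 a ha2 ha0 ha1 (Nat.cast_nonneg C4)
      (Nat.cast_nonneg C5) hNR hk4 hcaseR]

end Arith

/-- Let `k ≥ 4`, `θ = 1 + 1/√2`, `a = 1/√2`, `b = k/2 − 1/√2`, and let `F` be
a `T_k`-free `k`-PDG on `k+1` vertices. Over a uniformly random ordering
`(x_1, …, x_{k−1}, y, z)` of the vertices of `F`:
`P(xy) + kθ·P(x̌y) + a²·P(xy-none ∧ xz-none) − 2ab·P(xy-none ∧ x̌z) + b²·P(x̌y ∧ x̌z) ≤ 1`. -/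
theorem flag_inequality (k : ℕ) (hk : 4 ≤ k) (F : PDG (Fin (k + 1)))
    (hval : F.IsValid k) (hfree : ¬ (TkPDG k).IsSubgraph F) :
    permProb k (fun σ => insert (yVtx k σ) (xSet k σ) ∈ F.undir)
      + k * (1 + 1 / Real.sqrt 2) *
        permProb k (fun σ => (insert (yVtx k σ) (xSet k σ), yVtx k σ) ∈ F.dir)
      + (1 / Real.sqrt 2) ^ 2 *
        permProb k (fun σ => NoEdgeOn F (insert (yVtx k σ) (xSet k σ)) ∧
          NoEdgeOn F (insert (zVtx k σ) (xSet k σ)))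
      - 2 * (1 / Real.sqrt 2) * ((k : ℝ) / 2 - 1 / Real.sqrt 2) *
        permProb k (fun σ => NoEdgeOn F (insert (yVtx k σ) (xSet k σ)) ∧
          (insert (zVtx k σ) (xSet k σ), zVtx k σ) ∈ F.dir)
      + ((k : ℝ) / 2 - 1 / Real.sqrt 2) ^ 2 *
        permProb k (fun σ => (insert (yVtx k σ) (xSet k σ), yVtx k σ) ∈ F.dir ∧
          (insert (zVtx k σ) (xSet k σ), zVtx k σ) ∈ F.dir)
      ≤ 1 := by
  classical
  have hk1 : 1 ≤ k := by omega
  have h1 : ∀ σ : Equiv.Perm (Fin (k+1)), (insert (yVtx k σ) (xSet k σ) ∈ F.undir) ↔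
      (fun y z : Fin (k+1) => Finset.univ.erase z ∈ F.undir)
        (σ ⟨k - 1, by omega⟩) (σ ⟨k, Nat.lt_succ_self k⟩) := by
    intro σ; rw [insert_y_eq' hk σ]; exact Iff.rfl
  have h2 : ∀ σ : Equiv.Perm (Fin (k+1)),
      ((insert (yVtx k σ) (xSet k σ), yVtx k σ) ∈ F.dir) ↔
      (fun y z : Fin (k+1) => (Finset.univ.erase z, y) ∈ F.dir)
        (σ ⟨k - 1, by omega⟩) (σ ⟨k, Nat.lt_succ_self k⟩) := by
    intro σ; rw [insert_y_eq' hk σ]; exact Iff.rfl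
  have h3 : ∀ σ : Equiv.Perm (Fin (k+1)),
      (NoEdgeOn F (insert (yVtx k σ) (xSet k σ)) ∧
        NoEdgeOn F (insert (zVtx k σ) (xSet k σ))) ↔
      (fun y z : Fin (k+1) =>
          NoEdgeOn F (Finset.univ.erase z) ∧ NoEdgeOn F (Finset.univ.erase y))
        (σ ⟨k - 1, by omega⟩) (σ ⟨k, Nat.lt_succ_self k⟩) := by
    intro σ; rw [insert_y_eq' hk σ, insert_z_eq' hk σ]; exact Iff.rfl
  have h4 : ∀ σ : Equiv.Perm (Fin (k+1)),
      (NoEdgeOn F (insert (yVtx k σ) (xSet k σ)) ∧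
        (insert (zVtx k σ) (xSet k σ), zVtx k σ) ∈ F.dir) ↔
      (fun y z : Fin (k+1) =>
          NoEdgeOn F (Finset.univ.erase z) ∧ (Finset.univ.erase y, z) ∈ F.dir)
        (σ ⟨k - 1, by omega⟩) (σ ⟨k, Nat.lt_succ_self k⟩) := by
    intro σ; rw [insert_y_eq' hk σ, insert_z_eq' hk σ]; exact Iff.rfl
  have h5 : ∀ σ : Equiv.Perm (Fin (k+1)),
      ((insert (yVtx k σ) (xSet k σ), yVtx k σ) ∈ F.dir ∧
        (insert (zVtx k σ) (xSet k σ), zVtx k σ) ∈ F.dir) ↔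
      (fun y z : Fin (k+1) =>
          (Finset.univ.erase z, y) ∈ F.dir ∧ (Finset.univ.erase y, z) ∈ F.dir)
        (σ ⟨k - 1, by omega⟩) (σ ⟨k, Nat.lt_succ_self k⟩) := by
    intro σ; rw [insert_y_eq' hk σ, insert_z_eq' hk σ]; exact Iff.rfl
  have e1 := permProb_pair' hk1 (fun y z : Fin (k+1) => Finset.univ.erase z ∈ F.undir)
  have e2 := permProb_pair' hk1 (fun y z : Fin (k+1) => (Finset.univ.erase z, y) ∈ F.dir)
  have e3 := permProb_pair' hk1 (fun y z : Fin (k+1) =>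
    NoEdgeOn F (Finset.univ.erase z) ∧ NoEdgeOn F (Finset.univ.erase y))
  have e4 := permProb_pair' hk1 (fun y z : Fin (k+1) =>
    NoEdgeOn F (Finset.univ.erase z) ∧ (Finset.univ.erase y, z) ∈ F.dir)
  have e5 := permProb_pair' hk1 (fun y z : Fin (k+1) =>
    (Finset.univ.erase z, y) ∈ F.dir ∧ (Finset.univ.erase y, z) ∈ F.dir)
  rw [permProb_congr' h1, permProb_congr' h2, permProb_congr' h3, permProb_congr' h4,
    permProb_congr' h5, e1, e2, e3, e4, e5]
  have t1 := cardC1' F hk1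
  have t2 := cardC2' F hval
  have t3 := congrArg Finset.card (cardC3' F)
  rw [Finset.offDiag_card] at t3
  rw [t1, t2, t3]
  have hkpos : (0:ℝ) < ((k:ℝ) + 1) * k := by
    have h0 : (0:ℝ) < k := by exact_mod_cast (show 0 < k by omega)
    nlinarith
  refine combine_ineq _ _ _ _ _ _ _ _ _ _ hkpos ?_
  refine main_arith k _ _ _ _ _ hk (partition_card' F hval) ?_
  by_cases hA : ∀ r w, (Finset.univ.erase r, w) ∈ F.dir → NoEdgeOn F (Finset.univ.erase w)
  · left
    have t5 : (cFilter (fun p : Fin (k+1) × Fin (k+1) =>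
        p.1 ≠ p.2 ∧ (Finset.univ.erase p.2, p.1) ∈ F.dir ∧
          (Finset.univ.erase p.1, p.2) ∈ F.dir) Finset.univ).card = 0 := by
      rw [cardC5zero' F hA]
      rfl
    refine ⟨cardC4' F hval hA, t5, ?_⟩
    intro hD
    obtain ⟨v, hv⟩ := Finset.card_pos.mp hD
    simp only [mem_cFilter, Finset.mem_univ, true_and] at hv
    obtain ⟨w, hw⟩ := hv
    exact Finset.card_pos.mpr ⟨w, mem_cFilter.mpr ⟨Finset.mem_univ w, hA v w hw⟩⟩
  · right
    push_neg at hA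
    obtain ⟨r, w, hdir, hnw⟩ := hA
    have hw : Finset.univ.erase w ∈ F.undir ∨ ∃ u, (Finset.univ.erase w, u) ∈ F.dir := by
      by_contra h
      push_neg at h
      exact hnw ⟨h.1, h.2⟩
    have hwr : w ≠ r := by
      have := (hval.2.1 _ hdir).2
      simp only [Finset.mem_erase] at this
      exact this.1
    have hdisj : Disjoint
        (cFilter (fun v : Fin (k+1) => Finset.univ.erase v ∈ F.undir) Finset.univ)
        (cFilter (fun v : Fin (k+1) =>
          ∃ u, (Finset.univ.erase v, u) ∈ F.dir) Finset.univ) := by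
      rw [Finset.disjoint_left]
      intro v hv hv'
      simp only [mem_cFilter, Finset.mem_univ, true_and] at hv hv'
      obtain ⟨u, hu⟩ := hv'
      exact hval.2.2.1 _ hu hv
    have hset : (cFilter (fun v : Fin (k+1) =>
          Finset.univ.erase v ∈ F.undir) Finset.univ) ∪
        (cFilter (fun v : Fin (k+1) =>
          ∃ u, (Finset.univ.erase v, u) ∈ F.dir) Finset.univ) = {r, w} := by
      apply Finset.Subset.antisymm
      · intro v hv
        simp only [Finset.mem_union, mem_cFilter, Finset.mem_univ, true_and] at hv
        simp only [Finset.mem_insert, Finset.mem_singleton]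
        by_contra hvnot
        push_neg at hvnot
        exact free_case' F hk hval hfree r w hdir hw v hv hvnot.1 hvnot.2
      · intro x hx
        simp only [Finset.mem_insert, Finset.mem_singleton] at hx
        simp only [Finset.mem_union, mem_cFilter, Finset.mem_univ, true_and]
        rcases hx with rfl | rfl
        · right; exact ⟨w, hdir⟩
        · exact hw
    refine ⟨?_, ?_, ?_, ?_, ?_⟩
    · rw [← Finset.card_union_of_disjoint hdisj, hset, Finset.card_pair hwr.symm]
    · exact Finset.card_pos.mpr
        ⟨r, mem_cFilter.mpr ⟨Finset.mem_univ r, ⟨w, hdir⟩⟩⟩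
    · calc (cFilter (fun v : Fin (k+1) =>
            ∃ u, (Finset.univ.erase v, u) ∈ F.dir) Finset.univ).card
          ≤ ((cFilter (fun v : Fin (k+1) =>
              Finset.univ.erase v ∈ F.undir) Finset.univ) ∪
            (cFilter (fun v : Fin (k+1) =>
              ∃ u, (Finset.univ.erase v, u) ∈ F.dir) Finset.univ)).card :=
            Finset.card_le_card Finset.subset_union_right
        _ = 2 := by rw [hset, Finset.card_pair hwr.symm]
    · exact le_trans (Finset.card_le_card (cardC5sub' F))
        (le_of_eq (Finset.offDiag_card _))
    · have tp2 := partition_card' F hval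
      have h2c : (cFilter (fun v : Fin (k+1) =>
            Finset.univ.erase v ∈ F.undir) Finset.univ).card +
          (cFilter (fun v : Fin (k+1) =>
            ∃ u, (Finset.univ.erase v, u) ∈ F.dir) Finset.univ).card = 2 := by
        rw [← Finset.card_union_of_disjoint hdisj, hset, Finset.card_pair hwr.symm]
      omega
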